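/- Let 𝒜, ℬ, 𝒞, 𝒟 be Hermiticity-preserving linear maps between matrix algebras such that 𝒜 + ℬ, 𝒜 - ℬ, 𝒞 + 𝒟, and 𝒞 - 𝒟 are all completely positive. Then 𝒜 ∘ 𝒞 + ℬ ∘ 𝒟 and 𝒜 ∘ 𝒞 - ℬ ∘ 𝒟 are completely positive. -/

import Mathlib

open Matrix
open scoped Kronecker ComplexOrder

/-- The Choi matrix of a linear map between matrix algebras. -/
noncomputable def choiMatrix {α β : Type*} [Fintype α] [DecidableEq α]
    (Φ : Matrix α α ℂ →ₗ[ℂ] Matrix β β ℂ) : Matrix (α × β) (α × β) ℂ :=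
  Matrix.of fun p q => Φ (Matrix.single p.1 q.1 1) p.2 q.2

/-- A linear map between matrix algebras is completely positive iff its Choi matrix is
positive semidefinite. -/
def IsCompletelyPositive {α β : Type*} [Fintype α] [DecidableEq α] [Fintype β]
    (Φ : Matrix α α ℂ →ₗ[ℂ] Matrix β β ℂ) : Prop :=
  (choiMatrix Φ).PosSemidef

/-- A linear map between matrix algebras is Hermiticity preserving if it sends Hermitian
matrices to Hermitian matrices. -/
def IsHermitianPreserving {α β : Type*}
    (Φ : Matrix α α ℂ →ₗ[ℂ] Matrix β β ℂ) : Prop :=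
  ∀ X : Matrix α α ℂ, X.IsHermitian → (Φ X).IsHermitian

section Aux
set_option linter.unusedSectionVars false
variable {α β γ : Type*} [Fintype α] [DecidableEq α] [Fintype β] [DecidableEq β] [Fintype γ]

/-- Conjugation map `X ↦ Aᴴ * X * A`. -/
noncomputable def conjCP (A : Matrix α β ℂ) : Matrix α α ℂ →ₗ[ℂ] Matrix β β ℂ where
  toFun X := Aᴴ * X * A
  map_add' X Y := by simp [Matrix.add_mul, Matrix.mul_add]
  map_smul' c X := by simp [Matrix.smul_mul, Matrix.mul_smul]

lemma conjCP_stdBasis (A : Matrix α β ℂ) (i j : α) (p q : β) :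
    conjCP A (Matrix.single i j 1) p q = star (A i p) * A j q := by
  simp only [conjCP, LinearMap.coe_mk, AddHom.coe_mk, Matrix.mul_apply,
    Matrix.conjTranspose_apply, Matrix.single]
  simp only [Matrix.of_apply, ite_and, mul_ite, mul_one, mul_zero, ite_mul, zero_mul,
    Finset.sum_ite_eq, Finset.mem_univ, if_true]

lemma choi_conjCP (A : Matrix α β ℂ) :
    choiMatrix (conjCP A) =
      (Matrix.of fun (_ : Unit) (p : α × β) => A p.1 p.2)ᴴ *
      (Matrix.of fun (_ : Unit) (p : α × β) => A p.1 p.2) := by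
  ext ⟨i, p⟩ ⟨j, q⟩
  simp [choiMatrix, conjCP_stdBasis, Matrix.mul_apply, Matrix.conjTranspose_apply]

lemma cp_conjCP (A : Matrix α β ℂ) : IsCompletelyPositive (conjCP A) := by
  rw [IsCompletelyPositive, choi_conjCP]
  exact Matrix.posSemidef_conjTranspose_mul_self _

lemma choiMatrix_injective :
    Function.Injective (choiMatrix (α := α) (β := β)) := by
  intro Φ Ψ h
  have hbasis : ∀ i j, Φ (Matrix.single i j 1) = Ψ (Matrix.single i j 1) := by
    intro i j
    ext r s
    exact congrFun (congrFun h (i, r)) (j, s)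
  ext X : 1
  rw [Matrix.matrix_eq_sum_single X, map_sum, map_sum]
  refine Finset.sum_congr rfl fun i _ => ?_
  rw [map_sum, map_sum]
  refine Finset.sum_congr rfl fun j _ => ?_
  rw [show Matrix.single i j (X i j) = X i j • Matrix.single i j 1 by
    rw [Matrix.smul_single, smul_eq_mul, mul_one]]
  rw [_root_.map_smul, _root_.map_smul, hbasis i j]

lemma choiMatrix_sum {ι : Type*} (s : Finset ι) (Φ : ι → (Matrix α α ℂ →ₗ[ℂ] Matrix β β ℂ)) :
    choiMatrix (∑ k ∈ s, Φ k) = ∑ k ∈ s, choiMatrix (Φ k) := by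
  ext p q
  simp [choiMatrix, Matrix.sum_apply]

lemma psd_sum {ι n : Type*} [Fintype n] (s : Finset ι) {M : ι → Matrix n n ℂ}
    (h : ∀ k ∈ s, (M k).PosSemidef) : (∑ k ∈ s, M k).PosSemidef := by
  classical
  induction s using Finset.induction with
  | empty => simpa using Matrix.PosSemidef.zero
  | insert _ _ hk ih =>
    rw [Finset.sum_insert hk]
    exact (h _ (Finset.mem_insert_self _ _)).add
      (ih fun k hks => h k (Finset.mem_insert_of_mem hks))

/-- Kraus decomposition. -/
lemma kraus {Φ : Matrix α α ℂ →ₗ[ℂ] Matrix β β ℂ} (hΦ : IsCompletelyPositive Φ) :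
    ∃ A : (α × β) → Matrix α β ℂ, Φ = ∑ k, conjCP (A k) := by
  obtain ⟨B, hB⟩ := (by open scoped MatrixOrder in exact CStarAlgebra.nonneg_iff_eq_star_mul_self.mp hΦ.nonneg)
  refine ⟨fun k => Matrix.of fun i p => B k (i, p), choiMatrix_injective ?_⟩
  rw [choiMatrix_sum]
  ext ⟨i, p⟩ ⟨j, q⟩
  have := congrFun (congrFun hB (i, p)) (j, q)
  simp only [Matrix.mul_apply, Matrix.star_apply] at this
  simpa [choiMatrix, Matrix.sum_apply, conjCP_stdBasis] using this

lemma cp_sum {ι : Type*} (s : Finset ι) {Φ : ι → (Matrix α α ℂ →ₗ[ℂ] Matrix β β ℂ)}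
    (h : ∀ k ∈ s, IsCompletelyPositive (Φ k)) :
    IsCompletelyPositive (∑ k ∈ s, Φ k) := by
  rw [IsCompletelyPositive, choiMatrix_sum]
  exact psd_sum s h

lemma cp_comp [DecidableEq γ] {Φ : Matrix β β ℂ →ₗ[ℂ] Matrix γ γ ℂ}
    {Ψ : Matrix α α ℂ →ₗ[ℂ] Matrix β β ℂ}
    (hΦ : IsCompletelyPositive Φ) (hΨ : IsCompletelyPositive Ψ) :
    IsCompletelyPositive (Φ ∘ₗ Ψ) := by
  obtain ⟨A, rfl⟩ := kraus hΦ
  obtain ⟨B, rfl⟩ := kraus hΨ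
  have : ((∑ k, conjCP (A k)) ∘ₗ ∑ l, conjCP (B l)) =
      ∑ k, ∑ l, conjCP (B l * A k) := by
    ext X : 1
    simp only [LinearMap.comp_apply, LinearMap.sum_apply, conjCP, LinearMap.coe_mk,
      AddHom.coe_mk, Matrix.mul_sum, Matrix.sum_mul, Matrix.conjTranspose_mul,
      Matrix.mul_assoc]
  rw [this]
  exact cp_sum _ fun k _ => cp_sum _ fun l _ => cp_conjCP _

lemma cp_add {Φ Ψ : Matrix α α ℂ →ₗ[ℂ] Matrix β β ℂ}
    (hΦ : IsCompletelyPositive Φ) (hΨ : IsCompletelyPositive Ψ) :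
    IsCompletelyPositive (Φ + Ψ) := by
  have : choiMatrix (Φ + Ψ) = choiMatrix Φ + choiMatrix Ψ := by
    ext p q; simp [choiMatrix]
  rw [IsCompletelyPositive, this]
  exact hΦ.add hΨ

lemma cp_half {Φ : Matrix α α ℂ →ₗ[ℂ] Matrix β β ℂ}
    (hΦ : IsCompletelyPositive Φ) : IsCompletelyPositive ((2 : ℂ)⁻¹ • Φ) := by
  have hc : choiMatrix ((2 : ℂ)⁻¹ • Φ) = (2 : ℂ)⁻¹ • choiMatrix Φ := by
    ext p q; simp [choiMatrix]
  rw [IsCompletelyPositive, hc]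
  obtain ⟨hH, hP⟩ := hΦ
  refine ⟨?_, fun x => ?_⟩
  · rw [Matrix.IsHermitian, Matrix.conjTranspose_smul, hH.eq]
    norm_num
  · simp only [Matrix.smul_apply, smul_eq_mul, show ∀ u v w : ℂ, star u * ((2:ℂ)⁻¹ * v) * w = (2:ℂ)⁻¹ * (star u * v * w) from fun _ _ _ => by ring, ← Finsupp.mul_sum]
    refine mul_nonneg ?_ (hP x)
    rw [show ((2:ℂ)⁻¹) = ((2⁻¹ : ℝ) : ℂ) by norm_num]
    exact_mod_cast (by norm_num : (0:ℝ) ≤ 2⁻¹)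
end Aux

/-- If `𝒜, ℬ, 𝒞, 𝒟` are Hermiticity-preserving linear maps such that
`𝒜 ± ℬ` and `𝒞 ± 𝒟` are completely positive, then `𝒜 ∘ 𝒞 ± ℬ ∘ 𝒟` are completely positive. -/
theorem isCompletelyPositive_comp_add_comp_and_sub_comp
    {a b c : ℕ}
    (𝒜 ℬ : Matrix (Fin b) (Fin b) ℂ →ₗ[ℂ] Matrix (Fin c) (Fin c) ℂ)
    (𝒞 𝒟 : Matrix (Fin a) (Fin a) ℂ →ₗ[ℂ] Matrix (Fin b) (Fin b) ℂ)
    (hA : IsHermitianPreserving 𝒜) (hB : IsHermitianPreserving ℬ)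
    (hC : IsHermitianPreserving 𝒞) (hD : IsHermitianPreserving 𝒟)
    (hApB : IsCompletelyPositive (𝒜 + ℬ)) (hAmB : IsCompletelyPositive (𝒜 - ℬ))
    (hCpD : IsCompletelyPositive (𝒞 + 𝒟)) (hCmD : IsCompletelyPositive (𝒞 - 𝒟)) :
    IsCompletelyPositive (𝒜 ∘ₗ 𝒞 + ℬ ∘ₗ 𝒟) ∧ IsCompletelyPositive (𝒜 ∘ₗ 𝒞 - ℬ ∘ₗ 𝒟) := by
  have h1 := cp_add (cp_comp hApB hCpD) (cp_comp hAmB hCmD)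
  have h2 := cp_add (cp_comp hApB hCmD) (cp_comp hAmB hCpD)
  constructor
  · have e1 : 𝒜 ∘ₗ 𝒞 + ℬ ∘ₗ 𝒟 =
        (2:ℂ)⁻¹ • ((𝒜 + ℬ) ∘ₗ (𝒞 + 𝒟) + (𝒜 - ℬ) ∘ₗ (𝒞 - 𝒟)) := by
      ext X : 1
      simp only [LinearMap.add_apply, LinearMap.sub_apply, LinearMap.comp_apply,
        LinearMap.smul_apply, map_add, map_sub]
      module
    rw [e1]; exact cp_half h1
  · have e2 : 𝒜 ∘ₗ 𝒞 - ℬ ∘ₗ 𝒟 =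
        (2:ℂ)⁻¹ • ((𝒜 + ℬ) ∘ₗ (𝒞 - 𝒟) + (𝒜 - ℬ) ∘ₗ (𝒞 + 𝒟)) := by
      ext X : 1
      simp only [LinearMap.add_apply, LinearMap.sub_apply, LinearMap.comp_apply,
        LinearMap.smul_apply, map_add, map_sub]
      module
    rw [e2]; exact cp_half h2
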